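/- Let F be a field. The F-linear operator R on U₃(F) defined on the basis by R(e₁₁) = R(e₂₂) = R(e₃₃) = R(e₁₂) = 0, R(e₁₃) = e₁₂, and R(e₂₃) = e₂₂ is a Rota–Baxter operator of weight 0 on U₃(F). -/

import Mathlib

set_option synthInstance.maxHeartbeats 1000000
set_option maxHeartbeats 1000000

/-- The algebra of 3×3 upper-triangular matrices over `F`. -/
def UT3 (F : Type*) [Field F] : Subalgebra F (Matrix (Fin 3) (Fin 3) F) where
  carrier := {M | ∀ i j : Fin 3, j < i → M i j = 0}
  mul_mem' := by
    intro A B hA hB i j hij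
    show (A * B) i j = 0
    rw [Matrix.mul_apply]
    refine Finset.sum_eq_zero fun k _ => ?_
    rcases lt_or_ge k i with hk | hk
    · rw [hA i k hk, zero_mul]
    · rw [hB k j (lt_of_lt_of_le hij hk), mul_zero]
  one_mem' := by
    intro i j hij
    exact Matrix.one_apply_ne (fun h => absurd hij (by rw [h]; exact lt_irrefl j))
  add_mem' := by
    intro A B hA hB i j hij
    show A i j + B i j = 0
    rw [hA i j hij, hB i j hij, add_zero]
  zero_mem' := fun i j _ => rfl
  algebraMap_mem' := by
    intro r i j hij
    show algebraMap F (Matrix (Fin 3) (Fin 3) F) r i j = 0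
    rw [Matrix.algebraMap_eq_diagonal]
    exact Matrix.diagonal_apply_ne _ (fun h => absurd hij (by rw [h]; exact lt_irrefl j))

/-- The matrix unit `e_{ij}` as an element of `UT3 F`, for `i ≤ j`. -/
def eU {F : Type*} [Field F] (i j : Fin 3) (h : i ≤ j) : UT3 F :=
  ⟨Matrix.single i j 1, by
    intro a b hba
    by_cases hia : i = a
    · by_cases hjb : j = b
      · exact absurd hba (by rw [← hia, ← hjb]; exact not_lt.mpr h)
      · exact Matrix.single_apply_of_ne _ _ _ _ _ (by tauto)
    · exact Matrix.single_apply_of_ne _ _ _ _ _ (by tauto)⟩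

/-- A Rota–Baxter operator of weight zero: an `F`-linear map `R` with
`R(x)R(y) = R(R(x)y + xR(y))` for all `x, y`. -/
def IsRotaBaxterW0 {F : Type*} [Field F] {A : Type*} [Ring A] [Algebra F A]
    (R : A →ₗ[F] A) : Prop :=
  ∀ x y : A, R x * R y = R (R x * y + x * R y)


lemma UT3_decomp {F : Type*} [Field F] (x : UT3 F) :
    x = x.1 0 0 • eU 0 0 (by decide) + x.1 0 1 • eU 0 1 (by decide) +
        x.1 0 2 • eU 0 2 (by decide) + x.1 1 1 • eU 1 1 (by decide) +
        x.1 1 2 • eU 1 2 (by decide) + x.1 2 2 • eU 2 2 (by decide) := by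
  have h10 := x.2 1 0 (by decide)
  have h20 := x.2 2 0 (by decide)
  have h21 := x.2 2 1 (by decide)
  apply Subtype.ext
  show x.1 = _
  ext i j
  fin_cases i <;> fin_cases j <;>
    simp [eU, Matrix.add_apply, Matrix.smul_apply, Matrix.single, h10, h20, h21]

/-- The operator (R7): `R(e₁₁) = R(e₂₂) = R(e₃₃) = R(e₁₂) = 0`, `R(e₁₃) = e₁₂`,
`R(e₂₃) = e₂₂` is a Rota–Baxter operator of weight 0 on `U₃(F)`. -/
theorem rotaBaxter_R7 (F : Type*) [Field F] (R : UT3 F →ₗ[F] UT3 F)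
    (h11 : R (eU 0 0 (by decide)) = 0)
    (h22 : R (eU 1 1 (by decide)) = 0)
    (h33 : R (eU 2 2 (by decide)) = 0)
    (h12 : R (eU 0 1 (by decide)) = 0)
    (h13 : R (eU 0 2 (by decide)) = eU 0 1 (by decide))
    (h23 : R (eU 1 2 (by decide)) = eU 1 1 (by decide)) :
    IsRotaBaxterW0 R := by
  intro x y
  have hR : ∀ z : UT3 F, R z = z.1 0 2 • eU 0 1 (by decide) + z.1 1 2 • eU 1 1 (by decide) := by
    intro z
    calc R z = R (z.1 0 0 • eU 0 0 (by decide) + z.1 0 1 • eU 0 1 (by decide) +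
        z.1 0 2 • eU 0 2 (by decide) + z.1 1 1 • eU 1 1 (by decide) +
        z.1 1 2 • eU 1 2 (by decide) + z.1 2 2 • eU 2 2 (by decide)) := by rw [← UT3_decomp]
    _ = _ := by
        simp [map_add, map_smul, h11, h22, h33, h12, h13, h23]
  rw [hR x, hR y, hR (_ + _)]
  apply Subtype.ext
  show _ = ((_ : UT3 F) : Matrix (Fin 3) (Fin 3) F)
  have hx := hR x; have hy := hR y
  have hxm : (R x : Matrix (Fin 3) (Fin 3) F) = x.1 0 2 • (eU 0 1 (by decide) : UT3 F).1 + x.1 1 2 • (eU 1 1 (by decide) : UT3 F).1 := by rw [hx]; rfl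
  have hym : (R y : Matrix (Fin 3) (Fin 3) F) = y.1 0 2 • (eU 0 1 (by decide) : UT3 F).1 + y.1 1 2 • (eU 1 1 (by decide) : UT3 F).1 := by rw [hy]; rfl
  have hsum : ((R x * y + x * R y : UT3 F) : Matrix (Fin 3) (Fin 3) F)
      = (R x : Matrix (Fin 3) (Fin 3) F) * y.1 + x.1 * (R y : Matrix (Fin 3) (Fin 3) F) := rfl
  push_cast [hsum, hxm, hym]
  ext i j
  fin_cases i <;> fin_cases j <;>
    simp [eU, Matrix.mul_apply, Fin.sum_univ_three, Matrix.single, mul_comm]
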